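/- Leaves of execution models are well-founded models of the extending instances: Let C be a CP-theory, ⟨T, I, E⟩ an execution model of C, l a leaf of T, and σ a C-selection extending σ(l). Then every terminal well-founded induction of the instance C^σ has as its limit the total three-valued interpretation mapping each atom of I(l) to t and every other atom to f; that is, I(l) is the exact well-founded model of C^σ. -/

import Mathlib

noncomputable section
open scoped Classical

namespace CP

/-- The three truth values. -/
inductive TV where
  | f | u | t
deriving DecidableEq

namespace TV

/-- Rank of a truth value in the truth order `f ≤_t u ≤_t t`. -/
def rank : TV → ℕ
  | f => 0
  | u => 1
  | t => 2

/-- Minimum in the truth order. -/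
def tmin (a b : TV) : TV := if rank a ≤ rank b then a else b

/-- Maximum in the truth order. -/
def tmax (a b : TV) : TV := if rank a ≤ rank b then b else a

/-- Kleene negation. -/
def tneg : TV → TV
  | f => t
  | u => u
  | t => f

/-- The precision order on truth values: `u ≤_p f` and `u ≤_p t` (and reflexivity). -/
def lep (a b : TV) : Prop := a = u ∨ a = b

end TV

/-- Pointwise precision order on three-valued interpretations. -/
def leP {A : Type} (ν ν' : A → TV) : Prop := ∀ a, TV.lep (ν a) (ν' a)

/-- Propositional formulas over a type `A` of atoms. -/
inductive Form (A : Type) where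
  | atom : A → Form A
  | conj : Form A → Form A → Form A
  | disj : Form A → Form A → Form A
  | neg  : Form A → Form A

namespace Form

variable {A : Type}

/-- Two-valued satisfaction of a formula in an interpretation (a set of atoms). -/
def sat (I : Set A) : Form A → Prop
  | .atom a => a ∈ I
  | .conj φ ψ => sat I φ ∧ sat I ψ
  | .disj φ ψ => sat I φ ∨ sat I ψ
  | .neg φ => ¬ sat I φ

/-- Kleene three-valued valuation of a formula. -/
def val (ν : A → TV) : Form A → TV
  | .atom a => ν a
  | .conj φ ψ => TV.tmin (val ν φ) (val ν ψ)
  | .disj φ ψ => TV.tmax (val ν φ) (val ν ψ)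
  | .neg φ => TV.tneg (val ν φ)

/-- A formula is positive if it contains no negation. -/
def Positive : Form A → Prop
  | .atom _ => True
  | .conj φ ψ => Positive φ ∧ Positive ψ
  | .disj φ ψ => Positive φ ∧ Positive ψ
  | .neg _ => False

/-- The set of atoms occurring in a formula. -/
def atoms : Form A → Set A
  | .atom a => {a}
  | .conj φ ψ => atoms φ ∪ atoms ψ
  | .disj φ ψ => atoms φ ∪ atoms ψ
  | .neg φ => atoms φ

/-- Atoms occurring under a number of negations of parity `b` (`true` = odd). -/
def atomsPar : Bool → Form A → Set A
  | b, .atom a => if b then ∅ else {a}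
  | b, .conj φ ψ => atomsPar b φ ∪ atomsPar b ψ
  | b, .disj φ ψ => atomsPar b φ ∪ atomsPar b ψ
  | b, .neg φ => atomsPar (!b) φ

/-- Atoms occurring within the scope of an odd number of negations. -/
def natoms (φ : Form A) : Set A := atomsPar true φ

end Form

/-- A CP-law: a nonempty head list of distinct atoms with probabilities in `(0,1]`
summing to at most `1`, together with a body formula. -/
structure CPLaw (A : Type) where
  head : List (A × ℝ)
  body : Form A
  head_ne : head ≠ []
  head_nodup : (head.map Prod.fst).Nodup
  head_pos : ∀ p ∈ head, 0 < p.2 ∧ p.2 ≤ 1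
  head_sum : (head.map Prod.snd).sum ≤ 1

namespace CPLaw

variable {A : Type}

/-- `head_At(r)`: the set of atoms occurring in the head of `r`. -/
def headAt (r : CPLaw A) : Set A := {a | a ∈ r.head.map Prod.fst}

/-- The sum `Σᵢ αᵢ` of the probabilities in the head of `r`. -/
def psum (r : CPLaw A) : ℝ := (r.head.map Prod.snd).sum

end CPLaw

/-- A probabilistic process: a finite rooted tree (given by a parent function with a
depth function ensuring well-foundedness), with an interpretation, an edge probability
and a path probability attached to each node, together with (for use in execution
models) a CP-law index `rule` attached to each node and, for each non-root node, the
`choice` in the head of the rule fired at its parent that it corresponds to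
(`none` is the extra child carrying the leftover probability `1 - Σᵢ αᵢ`). -/
structure Proc (A R : Type) where
  Node : Type
  [fintypeNode : Fintype Node]
  root : Node
  parent : Node → Node
  depth : Node → ℕ
  interp : Node → Set A
  prob : Node → ℝ
  pathProb : Node → ℝ
  rule : Node → R
  choice : Node → Option ℕ
  depth_root : depth root = 0
  depth_parent : ∀ s, s ≠ root → depth s = depth (parent s) + 1
  pathProb_root : pathProb root = 1
  pathProb_parent : ∀ s, s ≠ root → pathProb s = pathProb (parent s) * prob s

attribute [instance] Proc.fintypeNode

namespace Proc

variable {A R : Type} (W : Proc A R)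

/-- `s'` is a child of `s`. -/
def isChild (s' s : W.Node) : Prop := s' ≠ W.root ∧ W.parent s' = s

/-- `s` is a leaf. -/
def isLeaf (s : W.Node) : Prop := ∀ s', ¬ W.isChild s' s

/-- `strictAnc a b`: `a` is a strict ancestor of `b`. -/
def strictAnc (a b : W.Node) : Prop :=
  Relation.TransGen (fun y x => W.isChild y x) b a

end Proc

variable {A R : Type}

/-- `R_E(s)`: the CP-laws that have not fired at any strict ancestor of `s`. -/
def RE (W : Proc A R) (s : W.Node) : Set R :=
  {r | ∀ s', W.strictAnc s' s → W.rule s' ≠ r}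

/-- The CP-law `E(s)` fires at the non-leaf node `s`: `s` has exactly one child for
each head element `(Aᵢ, αᵢ)` (with interpretation `I(s) ∪ {Aᵢ}` and edge probability
`αᵢ`), plus exactly one extra child with unchanged interpretation and edge probability
`1 - Σᵢ αᵢ` in case `Σᵢ αᵢ < 1`. -/
def FiresAt (C : R → CPLaw A) (W : Proc A R) (s : W.Node) : Prop :=
  (∀ s', W.isChild s' s →
     (∀ i, W.choice s' = some i →
        ∃ h : i < (C (W.rule s)).head.length,
          W.interp s' = insert ((C (W.rule s)).head.get ⟨i, h⟩).1 (W.interp s) ∧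
          W.prob s' = ((C (W.rule s)).head.get ⟨i, h⟩).2) ∧
     (W.choice s' = none →
        (C (W.rule s)).psum < 1 ∧ W.interp s' = W.interp s ∧
          W.prob s' = 1 - (C (W.rule s)).psum)) ∧
  (∀ s₁ s₂, W.isChild s₁ s → W.isChild s₂ s → W.choice s₁ = W.choice s₂ → s₁ = s₂) ∧
  (∀ i, i < (C (W.rule s)).head.length → ∃ s', W.isChild s' s ∧ W.choice s' = some i) ∧
  ((C (W.rule s)).psum < 1 → ∃ s', W.isChild s' s ∧ W.choice s' = none)

/-- `⟨W, I, E⟩` is a weak execution model of the CP-theory `C`. -/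
def IsWEM (C : R → CPLaw A) (W : Proc A R) : Prop :=
  W.interp W.root = (∅ : Set A) ∧
  (∀ s, s ≠ W.root → 0 ≤ W.prob s ∧ W.prob s ≤ 1) ∧
  (∀ s, ¬ W.isLeaf s →
    (∑ s' ∈ Finset.univ.filter (fun s' => W.isChild s' s), W.prob s') = 1) ∧
  (∀ s, ¬ W.isLeaf s →
    W.rule s ∈ RE W s ∧ Form.sat (W.interp s) (C (W.rule s)).body ∧ FiresAt C W s) ∧
  (∀ l, W.isLeaf l → ∀ r ∈ RE W l, ¬ Form.sat (W.interp l) (C r).body)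

/-- `ν 0, …, ν n` is a hypothetical derivation sequence at node `s`. -/
def IsHDS (C : R → CPLaw A) (W : Proc A R) (s : W.Node)
    (ν : ℕ → A → TV) (n : ℕ) : Prop :=
  (∀ a, ν 0 a = if a ∈ W.interp s then TV.t else TV.f) ∧
  ∀ i, i < n → ∃ r ∈ RE W s,
    Form.val (ν i) (C r).body ≠ TV.f ∧
    (∀ p ∈ (C r).headAt, ν i p = TV.f → ν (i+1) p = TV.u) ∧
    (∀ p, ¬ (p ∈ (C r).headAt ∧ ν i p = TV.f) → ν (i+1) p = ν i p)

/-- The hypothetical derivation sequence `ν 0, …, ν n` at `s` is terminal. -/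
def HDSTerminal (C : R → CPLaw A) (W : Proc A R) (s : W.Node)
    (ν : ℕ → A → TV) (n : ℕ) : Prop :=
  ¬ ∃ r ∈ RE W s, Form.val (ν n) (C r).body ≠ TV.f ∧
      ∃ p ∈ (C r).headAt, ν n p = TV.f

/-- `⟨W, I, E⟩` is an execution model of `C`: a weak execution model in which, at every
non-leaf node, the body of the fired CP-law is not unknown in the potential of the
node (the common limit of all terminal hypothetical derivation sequences). -/
def IsExec (C : R → CPLaw A) (W : Proc A R) : Prop :=
  IsWEM C W ∧
  ∀ s, ¬ W.isLeaf s → ∀ ν n, IsHDS C W s ν n → HDSTerminal C W s ν n →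
    Form.val (ν n) (C (W.rule s)).body ≠ TV.u

/-- `π_T`: the probability distribution on interpretations induced by a process. -/
def piT (W : Proc A R) (J : Set A) : ℝ :=
  ∑ l ∈ Finset.univ.filter (fun l => W.isLeaf l ∧ W.interp l = J), W.pathProb l

/-- A `C`-selection: for each CP-law occurrence, either a head element (`some i`)
or the distinguished `∅` outcome (`none`), which carries probability `1 - Σᵢ αᵢ`. -/
abbrev Sel (C : R → CPLaw A) : Type := (r : R) → Option (Fin (C r).head.length)

/-- The probability `σ^α(r)` of the outcome selected for `r` by `σ`. -/
def selWeight (C : R → CPLaw A) (σ : Sel C) (r : R) : ℝ :=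
  match σ r with
  | some i => ((C r).head.get i).2
  | none => 1 - (C r).psum

/-- The probability `P(σ) = Π_{r ∈ C} σ^α(r)` of a `C`-selection. -/
def selProb [Fintype R] (C : R → CPLaw A) (σ : Sel C) : ℝ :=
  ∏ r, selWeight C σ r

/-- `σ` extends the partial selection `σ(s)` determined by the path from the root
to `s`: for every strict ancestor `s'` of `s`, `σ` assigns to the rule fired at `s'`
the head element corresponding to the child of `s'` lying on the path to `s`. -/
def ExtendsPathSel (C : R → CPLaw A) (W : Proc A R) (σ : Sel C) (s : W.Node) : Prop :=
  ∀ s' s'', W.strictAnc s' s → W.isChild s'' s' → (s'' = s ∨ W.strictAnc s'' s) →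
    (σ (W.rule s')).map Fin.val = W.choice s''

/-- `ν` updated to map `p` to true. -/
def updT {A : Type} (ν : A → TV) (p : A) : A → TV :=
  fun a => if a = p then TV.t else ν a

/-- One step of a well-founded induction for the logic program `P` (a family of
rules, each a pair of a head atom and a body formula): either make the head of a
rule with true body true, or make an unfounded set false. -/
def WFStep {A Q : Type} (P : Q → A × Form A) (ν ν' : A → TV) : Prop :=
  (∃ q, Form.val ν (P q).2 = TV.t ∧ ν' = updT ν (P q).1) ∨
  (∃ U : Set A, (∀ p ∈ U, ν p = TV.u) ∧
    (∀ p, ν' p = if p ∈ U then TV.f else ν p) ∧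
    (∀ q, (P q).1 ∈ U → Form.val ν' (P q).2 = TV.f))

/-- `ν 0, …, ν m` is a well-founded induction of the logic program `P`. -/
def IsWFI {A Q : Type} (P : Q → A × Form A) (ν : ℕ → A → TV) (m : ℕ) : Prop :=
  (∀ a, ν 0 a = TV.u) ∧ ∀ j, j < m → WFStep P (ν j) (ν (j+1))

/-- The well-founded induction with limit `ν m` is terminal: no further step yields a
strictly more precise interpretation. -/
def WFITerminal {A Q : Type} (P : Q → A × Form A) (ν : ℕ → A → TV) (m : ℕ) : Prop :=
  ∀ ν', WFStep P (ν m) ν' → leP (ν m) ν' → ν' = ν m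

/-- The instance `C^σ`: the logic program consisting of the rules
`σ^h(r) ← body(r)` for all `r` with `σ^h(r) ≠ ∅`. -/
def instProg (C : R → CPLaw A) (σ : Sel C) :
    {r : R // (σ r).isSome} → A × Form A :=
  fun q => (((C q.1).head.get ((σ q.1).get q.2)).1, (C q.1).body)

/-- The logic program `P` has an exact well-founded model equal to `J`: some terminal
well-founded induction of `P` has as its limit the total interpretation corresponding
to `J`. -/
def LimitIs {A Q : Type} (P : Q → A × Form A) (J : Set A) : Prop :=
  ∃ ν m, IsWFI P ν m ∧ WFITerminal P ν m ∧
    ∀ a, ν m a = if a ∈ J then TV.t else TV.f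

/-- The instance based semantics `μ_C`. -/
def muC [Fintype R] (C : R → CPLaw A) (J : Set A) : ℝ :=
  ∑ σ ∈ Finset.univ.filter (fun σ : Sel C => LimitIs (instProg C σ) J),
    selProb C σ

/-! ### Auxiliary lemmas -/

namespace TV

lemma tmin_eq_t' {a b : TV} : tmin a b = t ↔ (a = t ∧ b = t) := by
  cases a <;> cases b <;> decide

lemma tmin_eq_f' {a b : TV} : tmin a b = f ↔ (a = f ∨ b = f) := by
  cases a <;> cases b <;> decide

lemma tmax_eq_t' {a b : TV} : tmax a b = t ↔ (a = t ∨ b = t) := by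
  cases a <;> cases b <;> decide

lemma tmax_eq_f' {a b : TV} : tmax a b = f ↔ (a = f ∧ b = f) := by
  cases a <;> cases b <;> decide

lemma tneg_eq_t' {a : TV} : tneg a = t ↔ a = f := by cases a <;> decide

lemma tneg_eq_f' {a : TV} : tneg a = f ↔ a = t := by cases a <;> decide

end TV

section AuxForm

variable {A : Type}

/-- The exact (total) three-valued interpretation corresponding to a set of atoms. -/
def ex (J : Set A) : A → TV := fun a => if a ∈ J then TV.t else TV.f

lemma ex_eq_t {J : Set A} {p : A} : ex J p = TV.t ↔ p ∈ J := by
  by_cases h : p ∈ J <;> simp [ex, h]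

lemma ex_eq_f {J : Set A} {p : A} : ex J p = TV.f ↔ p ∉ J := by
  by_cases h : p ∈ J <;> simp [ex, h]

lemma exact_val (J : Set A) (φ : Form A) :
    Form.val (ex J) φ = if Form.sat J φ then TV.t else TV.f := by
  induction φ with
  | atom a => by_cases h : a ∈ J <;> simp [Form.val, Form.sat, ex, h]
  | conj φ ψ ihφ ihψ =>
      by_cases h1 : Form.sat J φ <;> by_cases h2 : Form.sat J ψ <;>
        simp [Form.val, Form.sat, ihφ, ihψ, h1, h2, TV.tmin, TV.rank]
  | disj φ ψ ihφ ihψ =>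
      by_cases h1 : Form.sat J φ <;> by_cases h2 : Form.sat J ψ <;>
        simp [Form.val, Form.sat, ihφ, ihψ, h1, h2, TV.tmax, TV.rank]
  | neg φ ih =>
      by_cases h1 : Form.sat J φ <;>
        simp [Form.val, Form.sat, ih, h1, TV.tneg]

/-- Truth transfer lemma: if truth of positive-occurrence atoms and falsity of
negative-occurrence atoms is preserved from `ν` to `ν'`, then truth of formulas is
preserved (and dually for falsity). -/
lemma transfer (φ : Form A) (ν ν' : A → TV) :
    ((∀ p ∈ Form.atomsPar false φ, ν p = TV.t → ν' p = TV.t) →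
     (∀ p ∈ Form.atomsPar true φ, ν p = TV.f → ν' p = TV.f) →
     Form.val ν φ = TV.t → Form.val ν' φ = TV.t) ∧
    ((∀ p ∈ Form.atomsPar true φ, ν p = TV.t → ν' p = TV.t) →
     (∀ p ∈ Form.atomsPar false φ, ν p = TV.f → ν' p = TV.f) →
     Form.val ν φ = TV.f → Form.val ν' φ = TV.f) := by
  induction φ with
  | atom a =>
      constructor
      · intro h1 _ hv; exact h1 a (by simp [Form.atomsPar]) hv
      · intro _ h2 hv; exact h2 a (by simp [Form.atomsPar]) hv
  | conj φ ψ ihφ ihψ =>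
      constructor
      · intro h1 h2 hv
        simp only [Form.val, TV.tmin_eq_t'] at hv ⊢
        exact ⟨ihφ.1 (fun p hp => h1 p (Set.mem_union_left _ hp))
                 (fun p hp => h2 p (Set.mem_union_left _ hp)) hv.1,
               ihψ.1 (fun p hp => h1 p (Set.mem_union_right _ hp))
                 (fun p hp => h2 p (Set.mem_union_right _ hp)) hv.2⟩
      · intro h1 h2 hv
        simp only [Form.val, TV.tmin_eq_f'] at hv ⊢
        rcases hv with hv | hv
        · exact Or.inl (ihφ.2 (fun p hp => h1 p (Set.mem_union_left _ hp))
            (fun p hp => h2 p (Set.mem_union_left _ hp)) hv)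
        · exact Or.inr (ihψ.2 (fun p hp => h1 p (Set.mem_union_right _ hp))
            (fun p hp => h2 p (Set.mem_union_right _ hp)) hv)
  | disj φ ψ ihφ ihψ =>
      constructor
      · intro h1 h2 hv
        simp only [Form.val, TV.tmax_eq_t'] at hv ⊢
        rcases hv with hv | hv
        · exact Or.inl (ihφ.1 (fun p hp => h1 p (Set.mem_union_left _ hp))
            (fun p hp => h2 p (Set.mem_union_left _ hp)) hv)
        · exact Or.inr (ihψ.1 (fun p hp => h1 p (Set.mem_union_right _ hp))
            (fun p hp => h2 p (Set.mem_union_right _ hp)) hv)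
      · intro h1 h2 hv
        simp only [Form.val, TV.tmax_eq_f'] at hv ⊢
        exact ⟨ihφ.2 (fun p hp => h1 p (Set.mem_union_left _ hp))
                 (fun p hp => h2 p (Set.mem_union_left _ hp)) hv.1,
               ihψ.2 (fun p hp => h1 p (Set.mem_union_right _ hp))
                 (fun p hp => h2 p (Set.mem_union_right _ hp)) hv.2⟩
  | neg φ ih =>
      constructor
      · intro h1 h2 hv
        simp only [Form.val, TV.tneg_eq_t'] at hv ⊢
        exact ih.2 h1 h2 hv
      · intro h1 h2 hv
        simp only [Form.val, TV.tneg_eq_f'] at hv ⊢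
        exact ih.1 h1 h2 hv

/-- No-conflict lemma: if there is no atom occurring positively that is true in `ν`
but false in `ν'`, and no atom occurring negatively that is false in `ν` but true in
`ν'`, then a formula true in `ν` is not false in `ν'` (and dually). -/
lemma noconf (φ : Form A) (ν ν' : A → TV) :
    ((∀ p ∈ Form.atomsPar false φ, ¬(ν p = TV.t ∧ ν' p = TV.f)) →
     (∀ p ∈ Form.atomsPar true φ, ¬(ν p = TV.f ∧ ν' p = TV.t)) →
     Form.val ν φ = TV.t → Form.val ν' φ ≠ TV.f) ∧
    ((∀ p ∈ Form.atomsPar true φ, ¬(ν p = TV.t ∧ ν' p = TV.f)) →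
     (∀ p ∈ Form.atomsPar false φ, ¬(ν p = TV.f ∧ ν' p = TV.t)) →
     Form.val ν φ = TV.f → Form.val ν' φ ≠ TV.t) := by
  induction φ with
  | atom a =>
      constructor
      · intro h1 _ hv hv'; exact h1 a (by simp [Form.atomsPar]) ⟨hv, hv'⟩
      · intro _ h2 hv hv'; exact h2 a (by simp [Form.atomsPar]) ⟨hv, hv'⟩
  | conj φ ψ ihφ ihψ =>
      constructor
      · intro h1 h2 hv
        intro hf
        simp only [Form.val, TV.tmin_eq_t'] at hv
        simp only [Form.val, TV.tmin_eq_f'] at hf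
        rcases hf with hf | hf
        · exact ihφ.1 (fun p hp => h1 p (Set.mem_union_left _ hp))
            (fun p hp => h2 p (Set.mem_union_left _ hp)) hv.1 hf
        · exact ihψ.1 (fun p hp => h1 p (Set.mem_union_right _ hp))
            (fun p hp => h2 p (Set.mem_union_right _ hp)) hv.2 hf
      · intro h1 h2 hv
        intro hf
        simp only [Form.val, TV.tmin_eq_f'] at hv
        simp only [Form.val, TV.tmin_eq_t'] at hf
        obtain ⟨ht1, ht2⟩ := hf
        rcases hv with hv | hv
        · exact ihφ.2 (fun p hp => h1 p (Set.mem_union_left _ hp))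
            (fun p hp => h2 p (Set.mem_union_left _ hp)) hv ht1
        · exact ihψ.2 (fun p hp => h1 p (Set.mem_union_right _ hp))
            (fun p hp => h2 p (Set.mem_union_right _ hp)) hv ht2
  | disj φ ψ ihφ ihψ =>
      constructor
      · intro h1 h2 hv
        intro hf
        simp only [Form.val, TV.tmax_eq_t'] at hv
        simp only [Form.val, TV.tmax_eq_f'] at hf
        obtain ⟨hf1, hf2⟩ := hf
        rcases hv with hv | hv
        · exact ihφ.1 (fun p hp => h1 p (Set.mem_union_left _ hp))
            (fun p hp => h2 p (Set.mem_union_left _ hp)) hv hf1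
        · exact ihψ.1 (fun p hp => h1 p (Set.mem_union_right _ hp))
            (fun p hp => h2 p (Set.mem_union_right _ hp)) hv hf2
      · intro h1 h2 hv
        intro ht
        simp only [Form.val, TV.tmax_eq_f'] at hv
        simp only [Form.val, TV.tmax_eq_t'] at ht
        rcases ht with ht | ht
        · exact ihφ.2 (fun p hp => h1 p (Set.mem_union_left _ hp))
            (fun p hp => h2 p (Set.mem_union_left _ hp)) hv.1 ht
        · exact ihψ.2 (fun p hp => h1 p (Set.mem_union_right _ hp))
            (fun p hp => h2 p (Set.mem_union_right _ hp)) hv.2 ht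
  | neg φ ih =>
      constructor
      · intro h1 h2 hv
        simp only [Form.val, TV.tneg_eq_t'] at hv
        simp only [Form.val, TV.tneg_eq_f', ne_eq]
        exact ih.2 h1 h2 hv
      · intro h1 h2 hv
        simp only [Form.val, TV.tneg_eq_f'] at hv
        simp only [Form.val, TV.tneg_eq_t', ne_eq]
        exact ih.1 h1 h2 hv

/-- A formula satisfied (two-valued) by `I` cannot be false in a three-valued `ν`
that makes no atom of `I` false and whose true atoms all lie in `I`. -/
lemma sat_val_ne_f {I : Set A} {ν : A → TV} (φ : Form A) (hs : Form.sat I φ)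
    (h1 : ∀ q ∈ I, ν q ≠ TV.f) (h2 : ∀ q, ν q = TV.t → q ∈ I) :
    Form.val ν φ ≠ TV.f := by
  refine (noconf φ (ex I) ν).1 ?_ ?_ ?_
  · rintro p - ⟨hp, hp'⟩; exact h1 p (ex_eq_t.mp hp) hp'
  · rintro p - ⟨hp, hp'⟩; exact (ex_eq_f.mp hp) (h2 p hp')
  · rw [exact_val]; simp [hs]

end AuxForm

section AuxProc

variable {A R : Type}

lemma child_interp_subset (C : R → CPLaw A) (W : Proc A R) (hW : IsWEM C W)
    {s' s : W.Node} (hc : W.isChild s' s) : W.interp s ⊆ W.interp s' := by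
  have hnl : ¬ W.isLeaf s := fun hlf => hlf s' hc
  obtain ⟨-, -, hfire⟩ := hW.2.2.2.1 s hnl
  have hcl := hfire.1 s' hc
  cases hch : W.choice s' with
  | none => rw [(hcl.2 hch).2.1]
  | some i =>
      obtain ⟨hi, h2, -⟩ := hcl.1 i hch
      rw [h2]; exact Set.subset_insert _ _

lemma anc_interp_subset (C : R → CPLaw A) (W : Proc A R) (hW : IsWEM C W)
    {a b : W.Node} (hab : W.strictAnc a b) : W.interp a ⊆ W.interp b := by
  induction hab with
  | single h => exact child_interp_subset C W hW h
  | tail _ h2 ih => exact (child_interp_subset C W hW h2).trans ih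

lemma anc_iterate (W : Proc A R) {a b : W.Node} (hab : W.strictAnc a b) :
    ∃ j, 0 < j ∧ a = W.parent^[j] b ∧ j + W.depth a = W.depth b := by
  induction hab with
  | single h =>
      refine ⟨1, one_pos, ?_, ?_⟩
      · simp [h.2]
      · have := W.depth_parent b h.1
        rw [h.2] at this; omega
  | tail _ h2 ih =>
      obtain ⟨j, hj0, hje, hjd⟩ := ih
      refine ⟨j + 1, by omega, ?_, ?_⟩
      · rw [Function.iterate_succ_apply', ← hje, h2.2]
      · have := W.depth_parent _ h2.1
        rw [h2.2] at this; omega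

/-- The condition allowing a (productive) hypothetical-derivation step. -/
def hdsCond (C : R → CPLaw A) (W : Proc A R) (s : W.Node) (ν : A → TV) : Prop :=
  ∃ r ∈ RE W s, Form.val ν (C r).body ≠ TV.f ∧ ∃ p ∈ (C r).headAt, ν p = TV.f

noncomputable def hdsStep (C : R → CPLaw A) (W : Proc A R) (s : W.Node)
    (ν : A → TV) : A → TV :=
  if h : hdsCond C W s ν then
    fun p => if p ∈ (C h.choose).headAt ∧ ν p = TV.f then TV.u else ν p
  else ν

noncomputable def hdsSeq (C : R → CPLaw A) (W : Proc A R) (s : W.Node) : ℕ → A → TV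
  | 0 => ex (W.interp s)
  | (i+1) => hdsStep C W s (hdsSeq C W s i)

lemma hdsStep_cases (C : R → CPLaw A) (W : Proc A R) (s : W.Node) (ν : A → TV)
    (p : A) :
    hdsStep C W s ν p = ν p ∨ (ν p = TV.f ∧ hdsStep C W s ν p = TV.u) := by
  unfold hdsStep
  by_cases h : hdsCond C W s ν
  · rw [dif_pos h]
    by_cases h2 : p ∈ (C h.choose).headAt ∧ ν p = TV.f
    · exact Or.inr ⟨h2.2, if_pos h2⟩
    · exact Or.inl (if_neg h2)
  · rw [dif_neg h]; exact Or.inl rfl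

lemma hdsSeq_t (C : R → CPLaw A) (W : Proc A R) (s : W.Node) (n : ℕ) (p : A) :
    hdsSeq C W s n p = TV.t ↔ p ∈ W.interp s := by
  induction n with
  | zero =>
      show ex (W.interp s) p = TV.t ↔ _
      exact ex_eq_t
  | succ n ih =>
      show hdsStep C W s (hdsSeq C W s n) p = TV.t ↔ _
      rcases hdsStep_cases C W s (hdsSeq C W s n) p with hc | ⟨hf, hu⟩
      · rw [hc]; exact ih
      · rw [hu]
        constructor
        · intro hut; exact absurd hut (by decide)
        · intro hp; rw [ih.mpr hp] at hf; exact absurd hf (by decide)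

lemma hdsSeq_f_mono (C : R → CPLaw A) (W : Proc A R) (s : W.Node) (n : ℕ) (p : A)
    (hp : hdsSeq C W s (n+1) p = TV.f) : hdsSeq C W s n p = TV.f := by
  rcases hdsStep_cases C W s (hdsSeq C W s n) p with hc | ⟨hf, hu⟩
  · rw [← hc]; exact hp
  · exact hf

lemma hds_exists_term [Fintype A] (C : R → CPLaw A) (W : Proc A R) (s : W.Node) :
    ∃ n, ¬ hdsCond C W s (hdsSeq C W s n) := by
  by_contra hc
  push_neg at hc
  have hdec : ∀ n,
      (Finset.univ.filter fun p => hdsSeq C W s (n+1) p = TV.f).card <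
      (Finset.univ.filter fun p => hdsSeq C W s n p = TV.f).card := by
    intro n
    apply Finset.card_lt_card
    rw [Finset.ssubset_iff_of_subset]
    · obtain ⟨p, hpAt, hpf⟩ := (hc n).choose_spec.2.2
      refine ⟨p, by simp [hpf], ?_⟩
      simp only [Finset.mem_filter, Finset.mem_univ, true_and]
      have : hdsSeq C W s (n+1) p = TV.u := by
        show hdsStep C W s (hdsSeq C W s n) p = TV.u
        unfold hdsStep
        rw [dif_pos (hc n)]
        exact if_pos ⟨hpAt, hpf⟩
      rw [this]; decide
    · intro p hp
      simp only [Finset.mem_filter, Finset.mem_univ, true_and] at hp ⊢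
      exact hdsSeq_f_mono C W s n p hp
  have hle : ∀ n, (Finset.univ.filter fun p => hdsSeq C W s n p = TV.f).card + n ≤
      (Finset.univ.filter fun p => hdsSeq C W s 0 p = TV.f).card := by
    intro n
    induction n with
    | zero => simp
    | succ n ih => have := hdec n; omega
  have := hle ((Finset.univ.filter fun p => hdsSeq C W s 0 p = TV.f).card + 1)
  omega

noncomputable def hdsN [Fintype A] (C : R → CPLaw A) (W : Proc A R) (s : W.Node) : ℕ :=
  Nat.find (hds_exists_term C W s)

noncomputable def hdsLim [Fintype A] (C : R → CPLaw A) (W : Proc A R)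
    (s : W.Node) : A → TV :=
  hdsSeq C W s (hdsN C W s)

lemma hds_not_cond [Fintype A] (C : R → CPLaw A) (W : Proc A R) (s : W.Node) :
    ¬ hdsCond C W s (hdsLim C W s) :=
  Nat.find_spec (hds_exists_term C W s)

lemma hds_terminal [Fintype A] (C : R → CPLaw A) (W : Proc A R) (s : W.Node) :
    HDSTerminal C W s (hdsSeq C W s) (hdsN C W s) :=
  hds_not_cond C W s

lemma hds_isHDS [Fintype A] (C : R → CPLaw A) (W : Proc A R) (s : W.Node) :
    IsHDS C W s (hdsSeq C W s) (hdsN C W s) := by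
  refine ⟨fun a => rfl, ?_⟩
  intro i hi
  have h : hdsCond C W s (hdsSeq C W s i) :=
    not_not.mp (Nat.find_min (hds_exists_term C W s) hi)
  refine ⟨h.choose, h.choose_spec.1, h.choose_spec.2.1, ?_, ?_⟩
  · intro p hp hpf
    show hdsStep C W s (hdsSeq C W s i) p = TV.u
    unfold hdsStep; rw [dif_pos h]; exact if_pos ⟨hp, hpf⟩
  · intro p hp
    show hdsStep C W s (hdsSeq C W s i) p = hdsSeq C W s i p
    unfold hdsStep; rw [dif_pos h]; exact if_neg hp

/-- At a terminal HDS limit, a rule of `R_E(s)` with non-false body has no false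
head atom. -/
lemma hdsLim_head_ne_f [Fintype A] (C : R → CPLaw A) (W : Proc A R) (s : W.Node)
    {r : R} (hr : r ∈ RE W s) (hb : Form.val (hdsLim C W s) (C r).body ≠ TV.f)
    {p : A} (hp : p ∈ (C r).headAt) : hdsLim C W s p ≠ TV.f := by
  intro hpf
  exact hds_not_cond C W s ⟨r, hr, hb, p, hp, hpf⟩

lemma hdsLim_t [Fintype A] (C : R → CPLaw A) (W : Proc A R) (s : W.Node) (p : A) :
    hdsLim C W s p = TV.t ↔ p ∈ W.interp s :=
  hdsSeq_t C W s _ p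

end AuxProc

/-- Leaves of execution models are well-founded models of the extending instances: if
`l` is a leaf of an execution model of `C` and the `C`-selection `σ` extends `σ(l)`,
then every terminal well-founded induction of `C^σ` has as its limit the total
interpretation corresponding to `I(l)`; i.e., `I(l)` is the exact well-founded model
of `C^σ`. -/
theorem leaf_is_wfm_of_instance {A R : Type} [Fintype A] [Fintype R]
    (C : R → CPLaw A) (W : Proc A R) (h : IsExec C W)
    (l : W.Node) (hl : W.isLeaf l)
    (σ : Sel C) (hσ : ExtendsPathSel C W σ l)
    (ν : ℕ → A → TV) (m : ℕ)
    (h₁ : IsWFI (instProg C σ) ν m) (h₂ : WFITerminal (instProg C σ) ν m) :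
    ∀ a, ν m a = if a ∈ W.interp l then TV.t else TV.f := by
  have hW := h.1
  have hexec := h.2
  have hroot := hW.1
  have hnode := hW.2.2.2.1
  have hleafc := hW.2.2.2.2
  obtain ⟨k, hk⟩ : ∃ k, W.depth l = k := ⟨_, rfl⟩
  obtain ⟨sN, hsN⟩ : ∃ sN : ℕ → W.Node, ∀ t, sN t = W.parent^[k - t] l :=
    ⟨_, fun _ => rfl⟩
  -- basic path facts
  have depth_iter : ∀ j, j ≤ k → W.depth (W.parent^[j] l) = k - j := by
    intro j
    induction j with
    | zero => intro _; simpa using hk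
    | succ j ih =>
        intro hj
        have hd := ih (by omega)
        have hne : W.parent^[j] l ≠ W.root := by
          intro he
          rw [he, W.depth_root] at hd
          omega
        have hdp := W.depth_parent _ hne
        rw [Function.iterate_succ_apply']
        omega
  have sN_k : sN k = l := by rw [hsN]; simp
  have depth_sN : ∀ t, t ≤ k → W.depth (sN t) = t := by
    intro t ht
    rw [hsN]
    have h2 := depth_iter (k - t) (by omega)
    omega
  have sN_zero : sN 0 = W.root := by
    have hd := depth_sN 0 (Nat.zero_le k)
    by_contra hne
    have := W.depth_parent _ hne
    omega
  have sN_child : ∀ t, t < k → W.isChild (sN (t+1)) (sN t) := by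
    intro t ht
    refine ⟨?_, ?_⟩
    · intro he
      have hd := depth_sN (t+1) (by omega)
      rw [he, W.depth_root] at hd
      omega
    · show W.parent (sN (t+1)) = sN t
      rw [hsN, hsN]
      have he : k - t = k - (t+1) + 1 := by omega
      rw [he, Function.iterate_succ_apply']
  have sN_anc : ∀ u, u ≤ k → ∀ t, t < u → W.strictAnc (sN t) (sN u) := by
    intro u
    induction u with
    | zero => intro _ t ht; omega
    | succ u ih =>
        intro huk t ht
        rcases Nat.lt_succ_iff_lt_or_eq.mp ht with hc | hc
        · exact Relation.TransGen.head (sN_child u (by omega)) (ih (by omega) t hc)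
        · subst hc
          exact Relation.TransGen.single (sN_child t (by omega))
  have sN_anc_l : ∀ t, t < k → W.strictAnc (sN t) l := by
    intro t ht
    have := sN_anc k le_rfl t ht
    rwa [sN_k] at this
  have interp_mono : ∀ t u, t ≤ u → u ≤ k → W.interp (sN t) ⊆ W.interp (sN u) := by
    intro t u htu huk
    rcases eq_or_lt_of_le htu with hc | hc
    · rw [hc]
    · exact anc_interp_subset C W hW (sN_anc u huk t hc)
  have interp_sub_J : ∀ t, t ≤ k → W.interp (sN t) ⊆ W.interp l := by
    intro t ht
    have := interp_mono t k ht le_rfl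
    rwa [sN_k] at this
  have RE_path : ∀ t u, t ≤ u → u < k → W.rule (sN u) ∈ RE W (sN t) := by
    intro t u htu huk
    have hre := (hnode (sN u) (fun hlf => hlf _ (sN_child u huk))).1
    intro s' hanc
    rcases eq_or_lt_of_le htu with hc | hc
    · exact hre s' (by rwa [← hc])
    · exact hre s' (Relation.TransGen.trans (sN_anc u (le_of_lt huk) t hc) hanc)
  have anc_of_path : ∀ t, t ≤ k → ∀ s', W.strictAnc s' (sN t) → W.strictAnc s' l := by
    intro t ht s' hanc
    rcases eq_or_lt_of_le ht with hc | hc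
    · rwa [← sN_k, ← hc]
    · exact Relation.TransGen.trans (sN_anc_l t hc) hanc
  have RE_l_sub : ∀ r : R, r ∈ RE W l → ∀ t, t ≤ k → r ∈ RE W (sN t) := by
    intro r hr t ht s' hanc
    exact hr s' (anc_of_path t ht s' hanc)
  have sel_matches : ∀ t, t < k →
      (σ (W.rule (sN t))).map Fin.val = W.choice (sN (t+1)) := by
    intro t ht
    refine hσ (sN t) (sN (t+1)) (sN_anc_l t ht) (sN_child t ht) ?_
    rcases eq_or_lt_of_le (show t+1 ≤ k by omega) with hc | hc
    · left; rw [← sN_k, ← hc]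
    · right; exact sN_anc_l (t+1) hc
  have new_atom : ∀ t, t < k → ∀ a, a ∈ W.interp (sN (t+1)) → a ∉ W.interp (sN t) →
      ∃ j : Fin (C (W.rule (sN t))).head.length,
        σ (W.rule (sN t)) = some j ∧ ((C (W.rule (sN t))).head.get j).1 = a := by
    intro t ht a ha1 ha0
    have hnl : ¬ W.isLeaf (sN t) := fun hlf => hlf _ (sN_child t ht)
    have hcl := ((hnode (sN t) hnl).2.2).1 (sN (t+1)) (sN_child t ht)
    cases hch : W.choice (sN (t+1)) with
    | none =>
        rw [(hcl.2 hch).2.1] at ha1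
        exact absurd ha1 ha0
    | some i =>
        obtain ⟨hlen, hint, -⟩ := hcl.1 i hch
        have hsel := sel_matches t ht
        rw [hch] at hsel
        obtain ⟨j, hj, hjv⟩ := Option.map_eq_some_iff.mp hsel
        have hja : j = ⟨i, hlen⟩ := Fin.ext hjv
        refine ⟨j, hj, ?_⟩
        rw [hja]
        rw [hint] at ha1
        rcases Set.mem_insert_iff.mp ha1 with hc | hc
        · exact hc.symm
        · exact absurd hc ha0
  have head_in_J : ∀ r : R, ∀ j : Fin (C r).head.length, σ r = some j → r ∉ RE W l →
      ((C r).head.get j).1 ∈ W.interp l := by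
    intro r j hj hre
    have hex : ∃ s', W.strictAnc s' l ∧ W.rule s' = r := by
      by_contra hno
      push_neg at hno
      exact hre fun s' hanc => hno s' hanc
    obtain ⟨s', hanc, hrule⟩ := hex
    subst hrule
    obtain ⟨jj, hjj0, hje, hjjd⟩ := anc_iterate W hanc
    have hjjk : jj ≤ k := by omega
    have hs' : s' = sN (k - jj) := by
      rw [hsN]
      have h1 : k - (k - jj) = jj := by omega
      rw [h1]
      exact hje
    subst hs'
    have htk : k - jj < k := by omega
    have hsel := sel_matches (k - jj) htk
    rw [hj] at hsel
    simp only [Option.map_some] at hsel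
    have hnl : ¬ W.isLeaf (sN (k - jj)) := fun hlf => hlf _ (sN_child _ htk)
    have hcl := ((hnode _ hnl).2.2).1 (sN (k - jj + 1)) (sN_child _ htk)
    obtain ⟨hlen, hint, -⟩ := hcl.1 j.val hsel.symm
    have hmem : ((C (W.rule (sN (k - jj)))).head.get j).1 ∈
        W.interp (sN (k - jj + 1)) := by
      rw [hint]
      have hfe : (⟨j.val, hlen⟩ : Fin _) = j := Fin.ext rfl
      rw [hfe]
      exact Set.mem_insert _ _
    exact interp_sub_J (k - jj + 1) (by omega) hmem
  -- HDS limit facts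
  have H3' : ∀ t, t ≤ k → ∀ u, u ≤ k → ∀ p ∈ W.interp (sN u),
      hdsLim C W (sN t) p ≠ TV.f := by
    intro t ht u
    induction u with
    | zero =>
        intro _ p hp
        rw [sN_zero, hroot] at hp
        exact absurd hp (Set.notMem_empty p)
    | succ u ih =>
        intro huk p hp
        by_cases hpu : p ∈ W.interp (sN u)
        · exact ih (by omega) p hpu
        · by_cases hut : u < t
          · have hpt : p ∈ W.interp (sN t) := interp_mono (u+1) t (by omega) ht hp
            rw [(hdsLim_t C W (sN t) p).mpr hpt]
            decide
          · have htu : t ≤ u := by omega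
            have huk' : u < k := by omega
            obtain ⟨j', hj', hja'⟩ := new_atom u huk' p hp hpu
            have hre : W.rule (sN u) ∈ RE W (sN t) := RE_path t u htu huk'
            have hsat : Form.sat (W.interp (sN u)) (C (W.rule (sN u))).body :=
              (hnode (sN u) (fun hlf => hlf _ (sN_child u huk'))).2.1
            have hbne : Form.val (hdsLim C W (sN t)) (C (W.rule (sN u))).body ≠ TV.f := by
              refine sat_val_ne_f _ hsat (fun q hq => ih (by omega) q hq) ?_
              intro q hq
              exact interp_mono t u htu (by omega) ((hdsLim_t C W (sN t) q).mp hq)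
            refine hdsLim_head_ne_f C W (sN t) hre hbne ?_
            rw [← hja']
            exact List.mem_map_of_mem (f := Prod.fst) (List.get_mem _ _)
  have H3 : ∀ t, t ≤ k → ∀ p ∈ W.interp l, hdsLim C W (sN t) p ≠ TV.f := by
    intro t ht p hp
    exact H3' t ht k le_rfl p (by rwa [sN_k])
  have H2 : ∀ t, t < k →
      Form.val (hdsLim C W (sN t)) (C (W.rule (sN t))).body = TV.t := by
    intro t ht
    have hnl : ¬ W.isLeaf (sN t) := fun hlf => hlf _ (sN_child t ht)
    have hne_u := hexec (sN t) hnl (hdsSeq C W (sN t)) (hdsN C W (sN t))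
        (hds_isHDS C W (sN t)) (hds_terminal C W (sN t))
    have hsat := (hnode (sN t) hnl).2.1
    have hne_f : Form.val (hdsLim C W (sN t)) (C (W.rule (sN t))).body ≠ TV.f := by
      refine sat_val_ne_f _ hsat ?_ ?_
      · intro q hq
        rw [(hdsLim_t C W (sN t) q).mpr hq]
        decide
      · intro q hq
        exact (hdsLim_t C W (sN t) q).mp hq
    cases hv : Form.val (hdsLim C W (sN t)) (C (W.rule (sN t))).body with
    | t => rfl
    | u => exact absurd hv hne_u
    | f => exact absurd hv hne_f
  -- soundness of the well-founded induction w.r.t. I(l)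
  have Am : ∀ j, j ≤ m → ∀ a,
      (ν j a = TV.t → a ∈ W.interp l) ∧ (ν j a = TV.f → a ∉ W.interp l) := by
    intro j
    induction j with
    | zero =>
        intro _ a
        rw [h₁.1 a]
        constructor <;> intro hx <;> exact absurd hx (by decide)
    | succ j ih =>
        intro hjm a
        have ihA := ih (by omega)
        rcases h₁.2 j (by omega) with ⟨q, hq, hup⟩ | ⟨U, hU, hν', hbodies⟩
        · -- true step
          have hhead : (instProg C σ q).1 ∈ W.interp l := by
            have hsatJ : Form.sat (W.interp l) (C q.1).body := by
              have hvt : Form.val (ex (W.interp l)) (C q.1).body = TV.t := by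
                refine (transfer _ (ν j) (ex (W.interp l))).1 ?_ ?_ hq
                · intro p _ hp; exact ex_eq_t.mpr ((ihA p).1 hp)
                · intro p _ hp; exact ex_eq_f.mpr ((ihA p).2 hp)
              rw [exact_val] at hvt
              by_cases hs : Form.sat (W.interp l) (C q.1).body
              · exact hs
              · rw [if_neg hs] at hvt; exact absurd hvt (by decide)
            by_cases hre : q.1 ∈ RE W l
            · exact absurd hsatJ (hleafc l hl q.1 hre)
            · exact head_in_J q.1 ((σ q.1).get q.2) (Option.some_get q.2).symm hre
          rw [hup]
          by_cases ha : a = (instProg C σ q).1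
          · constructor
            · intro _; rw [ha]; exact hhead
            · intro hx
              rw [show updT (ν j) (instProg C σ q).1 a = TV.t from if_pos ha] at hx
              exact absurd hx (by decide)
          · have hres : updT (ν j) (instProg C σ q).1 a = ν j a := if_neg ha
            rw [hres]
            exact ihA a
        · -- false step
          have hUJ : ∀ b ∈ U, b ∉ W.interp l := by
            by_contra hcon
            push_neg at hcon
            obtain ⟨b0, hb0U, hb0J⟩ := hcon
            obtain ⟨t0, ⟨a0, ha0U, ha0J, ha0mem⟩, ht0min⟩ :=
              (fun (P : ℕ → Prop) (hP : ∃ n, P n) =>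
                (⟨Nat.find hP, Nat.find_spec hP, fun m hm => Nat.find_min hP hm⟩ :
                  ∃ n, P n ∧ ∀ m < n, ¬ P m))
                (fun t => ∃ b ∈ U, b ∈ W.interp l ∧ b ∈ W.interp (sN t))
                ⟨k, b0, hb0U, hb0J, by rwa [sN_k]⟩
            have ht0k : t0 ≤ k := by
              by_contra hcon2
              exact ht0min k (by omega) ⟨b0, hb0U, hb0J, by rwa [sN_k]⟩
            have ht0pos : 0 < t0 := by
              rcases Nat.eq_zero_or_pos t0 with h0 | h0
              · rw [h0, sN_zero, hroot] at ha0mem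
                exact absurd ha0mem (Set.notMem_empty _)
              · exact h0
            have ht'k : t0 - 1 < k := by omega
            have ha0mem' : a0 ∈ W.interp (sN (t0 - 1 + 1)) := by
              have he : t0 - 1 + 1 = t0 := by omega
              rw [he]
              exact ha0mem
            have ha0nmem : a0 ∉ W.interp (sN (t0 - 1)) := fun hmem =>
              ht0min (t0 - 1) (by omega) ⟨a0, ha0U, ha0J, hmem⟩
            obtain ⟨j', hj', hja'⟩ := new_atom (t0 - 1) ht'k a0 ha0mem' ha0nmem
            have hqs : (σ (W.rule (sN (t0 - 1)))).isSome := by rw [hj']; rfl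
            have hh : (instProg C σ ⟨W.rule (sN (t0 - 1)), hqs⟩).1 = a0 := by
              show ((C (W.rule (sN (t0 - 1)))).head.get
                ((σ (W.rule (sN (t0 - 1)))).get hqs)).1 = a0
              have hg : (σ (W.rule (sN (t0 - 1)))).get hqs = j' := by
                simp only [hj', Option.get_some]
              rw [hg]
              exact hja'
            have hbodyf : Form.val (ν (j+1)) (C (W.rule (sN (t0 - 1)))).body = TV.f := by
              have := hbodies ⟨W.rule (sN (t0 - 1)), hqs⟩ (by rw [hh]; exact ha0U)
              exact this
            refine (noconf ((C (W.rule (sN (t0 - 1)))).body)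
              (hdsLim C W (sN (t0 - 1))) (ν (j+1))).1 ?_ ?_ (H2 (t0 - 1) ht'k) hbodyf
            · rintro p - ⟨hp1, hp2⟩
              have hpmem : p ∈ W.interp (sN (t0 - 1)) :=
                (hdsLim_t C W (sN (t0 - 1)) p).mp hp1
              have hpJ : p ∈ W.interp l := interp_sub_J (t0 - 1) (by omega) hpmem
              have hpnU : p ∉ U := fun hpU =>
                ht0min (t0 - 1) (by omega) ⟨p, hpU, hpJ, hpmem⟩
              rw [hν' p, if_neg hpnU] at hp2
              exact (ihA p).2 hp2 hpJ
            · rintro p - ⟨hp1, hp2⟩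
              have hpnJ : p ∉ W.interp l := fun hpJ => H3 (t0 - 1) (by omega) p hpJ hp1
              rw [hν' p] at hp2
              by_cases hpU : p ∈ U
              · rw [if_pos hpU] at hp2; exact absurd hp2 (by decide)
              · rw [if_neg hpU] at hp2; exact hpnJ ((ihA p).1 hp2)
          constructor
          · intro hx
            rw [hν' a] at hx
            by_cases haU : a ∈ U
            · rw [if_pos haU] at hx; exact absurd hx (by decide)
            · rw [if_neg haU] at hx; exact (ihA a).1 hx
          · intro hx
            rw [hν' a] at hx
            by_cases haU : a ∈ U
            · exact hUJ a haU
            · rw [if_neg haU] at hx; exact (ihA a).2 hx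
  -- completeness along the path
  have GF : ∀ t, t ≤ k → ∀ p ∈ W.interp (sN t), ν m p = TV.t := by
    intro t
    induction t with
    | zero =>
        intro _ p hp
        rw [sN_zero, hroot] at hp
        exact absurd hp (Set.notMem_empty p)
    | succ t ih =>
        intro htk p hp
        have ht : t < k := by omega
        have G_t : ∀ p ∈ W.interp (sN t), ν m p = TV.t := ih (by omega)
        have F_t : ∀ p, hdsLim C W (sN t) p = TV.f → ν m p = TV.f := by
          have hUe : ∀ p, ¬(hdsLim C W (sN t) p = TV.f ∧ ν m p = TV.u) := by
            intro p0 hp0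
            have hstep : WFStep (instProg C σ) (ν m)
                (fun p => if p ∈ {p | hdsLim C W (sN t) p = TV.f ∧ ν m p = TV.u}
                  then TV.f else ν m p) := by
              right
              refine ⟨{p | hdsLim C W (sN t) p = TV.f ∧ ν m p = TV.u},
                fun p hp => hp.2,
                fun p => by
                  by_cases hp : p ∈ {p | hdsLim C W (sN t) p = TV.f ∧ ν m p = TV.u} <;>
                    simp [hp], ?_⟩
              intro q hqU
              have hj : σ q.1 = some ((σ q.1).get q.2) := (Option.some_get q.2).symm
              have hre : q.1 ∈ RE W (sN t) := by
                by_contra hnre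
                have hnrel : q.1 ∉ RE W l := fun hrel => hnre (RE_l_sub q.1 hrel t (by omega))
                have hmem := head_in_J q.1 _ hj hnrel
                exact H3 t (by omega) _ hmem hqU.1
              have hmemAt : (instProg C σ q).1 ∈ (C q.1).headAt := by
                show ((C q.1).head.get ((σ q.1).get q.2)).1 ∈
                  List.map Prod.fst (C q.1).head
                exact List.mem_map_of_mem (f := Prod.fst) (List.get_mem _ _)
              have hbf : Form.val (hdsLim C W (sN t)) (C q.1).body = TV.f := by
                by_contra hbnf
                exact hdsLim_head_ne_f C W (sN t) hre hbnf hmemAt hqU.1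
              refine (transfer ((C q.1).body) (hdsLim C W (sN t))
                (fun p => if p ∈ {p | hdsLim C W (sN t) p = TV.f ∧ ν m p = TV.u}
                  then TV.f else ν m p)).2 ?_ ?_ hbf
              · intro p _ hpt
                have hpmem := (hdsLim_t C W (sN t) p).mp hpt
                have hpm : ν m p = TV.t := G_t p hpmem
                have hpnU : p ∉ {p | hdsLim C W (sN t) p = TV.f ∧ ν m p = TV.u} :=
                  fun hU => absurd (hpm.symm.trans hU.2) (by decide)
                show (if _ then TV.f else ν m p) = TV.t
                rw [if_neg hpnU, hpm]
              · intro p _ hpf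
                show (if _ then TV.f else ν m p) = TV.f
                by_cases hpU : p ∈ {p | hdsLim C W (sN t) p = TV.f ∧ ν m p = TV.u}
                · rw [if_pos hpU]
                · rw [if_neg hpU]
                  have hpnJ : p ∉ W.interp l := fun hpJ => H3 t (by omega) p hpJ hpf
                  cases hv : ν m p with
                  | f => rfl
                  | t => exact absurd ((Am m le_rfl p).1 hv) hpnJ
                  | u => exact absurd (show p ∈ {p | hdsLim C W (sN t) p = TV.f ∧
                      ν m p = TV.u} from ⟨hpf, hv⟩) hpU
            have hlep : leP (ν m)
                (fun p => if p ∈ {p | hdsLim C W (sN t) p = TV.f ∧ ν m p = TV.u}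
                  then TV.f else ν m p) := by
              intro b
              by_cases hbU : b ∈ {p | hdsLim C W (sN t) p = TV.f ∧ ν m p = TV.u}
              · exact Or.inl hbU.2
              · exact Or.inr (if_neg hbU).symm
            have heq := h₂ _ hstep hlep
            have hval : (if p0 ∈ {p | hdsLim C W (sN t) p = TV.f ∧ ν m p = TV.u}
                then TV.f else ν m p0) = ν m p0 := congrFun heq p0
            rw [if_pos (show p0 ∈ {p | hdsLim C W (sN t) p = TV.f ∧ ν m p = TV.u}
              from hp0), hp0.2] at hval
            exact absurd hval (by decide)
          intro p hpf
          cases hv : ν m p with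
          | f => rfl
          | u => exact absurd ⟨hpf, hv⟩ (hUe p)
          | t => exact absurd hpf (H3 t (by omega) p ((Am m le_rfl p).1 hv))
        by_cases hpt : p ∈ W.interp (sN t)
        · exact G_t p hpt
        · obtain ⟨j', hj', hja'⟩ := new_atom t ht p hp hpt
          have hqs : (σ (W.rule (sN t))).isSome := by rw [hj']; rfl
          have hvt : Form.val (ν m) (C (W.rule (sN t))).body = TV.t := by
            refine (transfer _ (hdsLim C W (sN t)) (ν m)).1 ?_ ?_ (H2 t ht)
            · intro q _ hq; exact G_t q ((hdsLim_t C W (sN t) q).mp hq)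
            · intro q _ hq; exact F_t q hq
          have hh : (instProg C σ ⟨W.rule (sN t), hqs⟩).1 = p := by
            show ((C (W.rule (sN t))).head.get ((σ (W.rule (sN t))).get hqs)).1 = p
            have hg : (σ (W.rule (sN t))).get hqs = j' := by
              simp only [hj', Option.get_some]
            rw [hg]
            exact hja'
          have hstep : WFStep (instProg C σ) (ν m) (updT (ν m) p) := by
            left
            refine ⟨⟨W.rule (sN t), hqs⟩, hvt, ?_⟩
            rw [hh]
          have hlep : leP (ν m) (updT (ν m) p) := by
            intro b
            by_cases hb : b = p
            · subst hb
              cases hv : ν m b with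
              | u => exact Or.inl rfl
              | t => exact Or.inr (by rw [show updT (ν m) b b = TV.t from if_pos rfl])
              | f =>
                  have := (Am m le_rfl b).2 hv
                  exact absurd (interp_sub_J (t+1) (by omega) hp) this
            · exact Or.inr (show ν m b = updT (ν m) p b from (if_neg hb).symm)
          have heq := h₂ _ hstep hlep
          have hval : updT (ν m) p p = ν m p := by rw [heq]
          rw [show updT (ν m) p p = TV.t from if_pos rfl] at hval
          exact hval.symm
  have Gk : ∀ p ∈ W.interp l, ν m p = TV.t := by
    intro p hp
    exact GF k le_rfl p (by rwa [sN_k])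
  have noU : ∀ p, ν m p ≠ TV.u := by
    intro p0 hp0
    have hν'ex : (fun p => if p ∈ {p | ν m p = TV.u} then TV.f else ν m p)
        = ex (W.interp l) := by
      funext p
      by_cases hpJ : p ∈ W.interp l
      · have h1 : ν m p = TV.t := Gk p hpJ
        rw [if_neg (show p ∉ {p | ν m p = TV.u} from fun hc =>
          absurd (h1.symm.trans (show ν m p = TV.u from hc)) (by decide)), h1]
        exact (ex_eq_t.mpr hpJ).symm
      · by_cases hpu : ν m p = TV.u
        · rw [if_pos (show p ∈ {p | ν m p = TV.u} from hpu)]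
          exact (ex_eq_f.mpr hpJ).symm
        · have hpf : ν m p = TV.f := by
            cases hv : ν m p with
            | f => rfl
            | u => exact absurd hv hpu
            | t => exact absurd ((Am m le_rfl p).1 hv) hpJ
          rw [if_neg (show p ∉ {p | ν m p = TV.u} from hpu), hpf]
          exact (ex_eq_f.mpr hpJ).symm
    have hstep : WFStep (instProg C σ) (ν m)
        (fun p => if p ∈ {p | ν m p = TV.u} then TV.f else ν m p) := by
      right
      refine ⟨{p | ν m p = TV.u}, fun p hp => hp,
        fun p => by by_cases hp : p ∈ {p | ν m p = TV.u} <;> simp [hp], ?_⟩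
      intro q hqU
      have hj : σ q.1 = some ((σ q.1).get q.2) := (Option.some_get q.2).symm
      have hnJ : (instProg C σ q).1 ∉ W.interp l := by
        intro hmem
        exact absurd ((Gk _ hmem).symm.trans (show ν m (instProg C σ q).1 = TV.u
          from hqU)) (by decide)
      have hre : q.1 ∈ RE W l := by
        by_contra hnre
        exact hnJ (head_in_J q.1 _ hj hnre)
      have hnsat : ¬ Form.sat (W.interp l) (C q.1).body := hleafc l hl q.1 hre
      show Form.val _ (C q.1).body = TV.f
      rw [hν'ex, exact_val, if_neg hnsat]
    have hlep : leP (ν m)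
        (fun p => if p ∈ {p | ν m p = TV.u} then TV.f else ν m p) := by
      intro b
      by_cases hbU : b ∈ {p | ν m p = TV.u}
      · exact Or.inl hbU
      · exact Or.inr (if_neg hbU).symm
    have heq := h₂ _ hstep hlep
    have hval : (if p0 ∈ {p | ν m p = TV.u} then TV.f else ν m p0)
        = ν m p0 := congrFun heq p0
    rw [if_pos (show p0 ∈ {p | ν m p = TV.u} from hp0), hp0] at hval
    exact absurd hval (by decide)
  intro a
  by_cases ha : a ∈ W.interp l
  · rw [if_pos ha]
    exact Gk a ha
  · rw [if_neg ha]
    cases hv : ν m a with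
    | f => rfl
    | u => exact absurd hv (noU a)
    | t => exact absurd ((Am m le_rfl a).1 hv) ha

end CP
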